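/- A finite-dimensional complex Lie superalgebra $\mathfrak{g}=\mathfrak{g}_0\oplus\mathfrak{g}_1$ is nilpotent (i.e. the descending series $\mathfrak{g}^0=\mathfrak{g}$, $\mathfrak{g}^k=[\mathfrak{g},\mathfrak{g}^{k-1}]$ eventually vanishes) if and only if $\mathfrak{g}_0$ is a nilpotent Lie algebra and for every $x\in\mathfrak{g}_0$ the operator $\rho(x)=[x,\cdot]\colon\mathfrak{g}_1\to\mathfrak{g}_1$ is nilpotent. -/

import Mathlib

/-- A complex Lie superalgebra `𝔤 = V0 ⊕ V1` in component form: an even bracket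
`b0`, an action `ρ` of the even part on the odd part, and a symmetric map `Γ`
on the odd part, subject to the (super) Jacobi identities. -/
structure SuperBracket (V0 V1 : Type*) [AddCommGroup V0] [Module ℂ V0]
    [AddCommGroup V1] [Module ℂ V1] where
  b0 : V0 →ₗ[ℂ] V0 →ₗ[ℂ] V0
  ρ : V0 →ₗ[ℂ] V1 →ₗ[ℂ] V1
  Γ : V1 →ₗ[ℂ] V1 →ₗ[ℂ] V0
  b0_skew : ∀ x y, b0 x y = - b0 y x
  Γ_symm : ∀ u v, Γ u v = Γ v u
  jacobi00 : ∀ x y z, b0 (b0 x y) z + b0 (b0 y z) x + b0 (b0 z x) y = 0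
  jacobi001 : ∀ x y u, ρ (b0 x y) u = ρ x (ρ y u) - ρ y (ρ x u)
  jacobi011 : ∀ x u v, b0 x (Γ u v) = Γ (ρ x u) v + Γ u (ρ x v)
  jacobi111 : ∀ u v w, ρ (Γ u v) w + ρ (Γ v w) u + ρ (Γ u w) v = 0

namespace SuperBracket

variable {V0 V1 : Type*} [AddCommGroup V0] [Module ℂ V0] [AddCommGroup V1] [Module ℂ V1]

/-- The descending central series `𝔤⁰ = 𝔤`, `𝔤ᵏ = [𝔤, 𝔤ᵏ⁻¹]`, recorded as a
pair (even part, odd part) of submodules. -/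
def series (L : SuperBracket V0 V1) : ℕ → Submodule ℂ V0 × Submodule ℂ V1
  | 0 => (⊤, ⊤)
  | k + 1 =>
      (Submodule.span ℂ ({z | ∃ x y, y ∈ (series L k).1 ∧ z = L.b0 x y} ∪
          {z | ∃ u v, v ∈ (series L k).2 ∧ z = L.Γ u v}),
        Submodule.span ℂ
          {z | ∃ x v, (x ∈ (series L k).1 ∨ v ∈ (series L k).2) ∧ z = L.ρ x v})

/-- A Lie superalgebra is nilpotent if its descending central series vanishes. -/
def IsNilpotent (L : SuperBracket V0 V1) : Prop := ∃ k, series L k = (⊥, ⊥)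

/-- The descending central series of the even part `𝔤₀` alone. -/
def series0 (L : SuperBracket V0 V1) : ℕ → Submodule ℂ V0
  | 0 => ⊤
  | k + 1 => Submodule.span ℂ {z | ∃ x y, y ∈ series0 L k ∧ z = L.b0 x y}

end SuperBracket


namespace SuperBracket

variable {V0 V1 : Type*} [AddCommGroup V0] [Module ℂ V0] [AddCommGroup V1] [Module ℂ V1]

section Identities

variable (L : SuperBracket V0 V1)

lemma b0_leibniz (x y z : V0) :
    L.b0 x (L.b0 y z) = L.b0 (L.b0 x y) z + L.b0 y (L.b0 x z) := by
  have h := L.jacobi00 x y z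
  have e1 : L.b0 (L.b0 y z) x = - L.b0 x (L.b0 y z) := L.b0_skew _ _
  have e2 : L.b0 (L.b0 z x) y = L.b0 y (L.b0 x z) := by
    rw [L.b0_skew z x, map_neg, LinearMap.neg_apply, L.b0_skew (L.b0 x z) y, neg_neg]
  rw [e1, e2] at h
  have h2 : L.b0 x (L.b0 y z) - (L.b0 (L.b0 x y) z + L.b0 y (L.b0 x z)) =
      -(L.b0 (L.b0 x y) z + -L.b0 x (L.b0 y z) + L.b0 y (L.b0 x z)) := by abel
  rw [h, neg_zero, sub_eq_zero] at h2
  exact h2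

lemma b0_self (x : V0) : L.b0 x x = 0 := by
  have h := L.b0_skew x x
  have h2 : (2 : ℂ) • L.b0 x x = 0 := by
    rw [two_smul]; nth_rewrite 2 [h]; exact add_neg_cancel _
  rcases smul_eq_zero.mp h2 with h3 | h3
  · exact absurd h3 (by norm_num)
  · exact h3

end Identities

/-! ### The even part as a genuine Lie algebra, and Engel's theorem -/

/-- Type synonym for `V0`, equipped with the Lie algebra structure `b0`. -/
def EvenAlg (_L : SuperBracket V0 V1) : Type _ := V0

variable (L : SuperBracket V0 V1)

instance : AddCommGroup (EvenAlg L) := inferInstanceAs (AddCommGroup V0)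
instance : Module ℂ (EvenAlg L) := inferInstanceAs (Module ℂ V0)

instance : LieRing (EvenAlg L) :=
  { (inferInstance : AddCommGroup (EvenAlg L)) with
    bracket := fun x y => L.b0 x y
    add_lie := fun x y z => by
      show L.b0 (x + y) z = L.b0 x z + L.b0 y z
      exact L.b0.map_add₂ x y z
    lie_add := fun x y z => by
      show L.b0 x (y + z) = L.b0 x y + L.b0 x z
      exact (L.b0 x).map_add y z
    lie_self := fun x => L.b0_self x
    leibniz_lie := fun x y z => L.b0_leibniz x y z }

instance : LieAlgebra ℂ (EvenAlg L) :=
  { (inferInstance : Module ℂ (EvenAlg L)) with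
    lie_smul := fun c x y => by
      show L.b0 x (c • y) = c • L.b0 x y
      exact (L.b0 x).map_smul c y }

instance [FiniteDimensional ℂ V0] : IsNoetherian ℂ (EvenAlg L) :=
  inferInstanceAs (IsNoetherian ℂ V0)

/-- A representation of the even part on a module `M`. -/
structure LieRep (L : SuperBracket V0 V1) (M : Type*) [AddCommGroup M] [Module ℂ M] where
  tod : V0 →ₗ[ℂ] M →ₗ[ℂ] M
  comm : ∀ x y, tod (L.b0 x y) = tod x ∘ₗ tod y - tod y ∘ₗ tod x

variable {M : Type*} [AddCommGroup M] [Module ℂ M]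

/-- Type synonym for `M` as a Lie module over `EvenAlg L`. -/
def LieRep.Car {L : SuperBracket V0 V1} (_r : LieRep L M) : Type _ := M

variable {L}

instance (r : LieRep L M) : AddCommGroup r.Car := inferInstanceAs (AddCommGroup M)
instance (r : LieRep L M) : Module ℂ r.Car := inferInstanceAs (Module ℂ M)

instance (r : LieRep L M) : LieRingModule (EvenAlg L) r.Car where
  bracket x m := r.tod x m
  add_lie x y m := by
    show r.tod (x + y) m = r.tod x m + r.tod y m
    exact r.tod.map_add₂ x y m
  lie_add x m n := by
    show r.tod x (m + n) = r.tod x m + r.tod x n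
    exact (r.tod x).map_add m n
  leibniz_lie x y m := by
    show r.tod x (r.tod y m) = r.tod (L.b0 x y) m + r.tod y (r.tod x m)
    have h : r.tod x (r.tod y m) - r.tod y (r.tod x m) = r.tod (L.b0 x y) m :=
      (LinearMap.congr_fun (r.comm x y) m).symm
    exact eq_add_of_sub_eq h

instance (r : LieRep L M) : LieModule ℂ (EvenAlg L) r.Car where
  smul_lie c x m := by
    show r.tod (c • x) m = c • r.tod x m
    exact r.tod.map_smul₂ c x m
  lie_smul c x m := by
    show r.tod x (c • m) = c • r.tod x m
    exact (r.tod x).map_smul c m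

theorem LieRep.exists_ker [FiniteDimensional ℂ V0] (r : LieRep L M) [Nontrivial M]
    (hnil : ∀ x : V0, _root_.IsNilpotent (r.tod x : Module.End ℂ M)) :
    ∃ m : M, m ≠ 0 ∧ ∀ x : V0, r.tod x m = 0 := by
  have hnilmod : LieModule.IsNilpotent (EvenAlg L) r.Car := by
    rw [LieModule.isNilpotent_iff_forall (R := ℂ)]
    intro x
    have he : LieModule.toEnd ℂ (EvenAlg L) r.Car x = r.tod x := by
      ext m; rfl
    rw [he]; exact hnil x
  haveI : Nontrivial r.Car := ‹Nontrivial M›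
  haveI := hnilmod
  haveI := LieModule.nontrivial_max_triv_of_isNilpotent (R := ℂ) (L := EvenAlg L) (M := r.Car)
  obtain ⟨⟨m, hm⟩, hm0⟩ := exists_ne (0 : LieModule.maxTrivSubmodule ℂ (EvenAlg L) r.Car)
  refine ⟨m, ?_, ?_⟩
  · intro h
    exact hm0 (Subtype.ext h)
  · intro x
    exact hm x

end SuperBracket

namespace SuperBracket

variable {V0 V1 : Type*} [AddCommGroup V0] [Module ℂ V0] [AddCommGroup V1] [Module ℂ V1]
variable {M : Type*} [AddCommGroup M] [Module ℂ M]

/-- Relative Engel: given a representation of the even part by nilpotent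
endomorphisms and an invariant proper submodule `Z`, there is a vector outside
`Z` moved into `Z` by every operator. -/
theorem exists_rel_ker (L : SuperBracket V0 V1) [FiniteDimensional ℂ V0]
    (d : V0 →ₗ[ℂ] M →ₗ[ℂ] M)
    (hcomm : ∀ x y, d (L.b0 x y) = d x ∘ₗ d y - d y ∘ₗ d x)
    (hnil : ∀ x : V0, _root_.IsNilpotent (d x : Module.End ℂ M))
    (Z : Submodule ℂ M) (hinv : ∀ (x : V0), ∀ m ∈ Z, d x m ∈ Z)
    (hne : Z ≠ ⊤) : ∃ m, m ∉ Z ∧ ∀ x, d x m ∈ Z := by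
  let q : V0 → (M ⧸ Z) →ₗ[ℂ] (M ⧸ Z) := fun x => Z.mapQ Z (d x) (hinv x)
  have hq : ∀ (x : V0) (m : M),
      q x (Submodule.Quotient.mk m) = Submodule.Quotient.mk (d x m) :=
    fun x m => Submodule.mapQ_apply ..
  have hsur := Submodule.Quotient.mk_surjective Z
  let D : V0 →ₗ[ℂ] (M ⧸ Z) →ₗ[ℂ] (M ⧸ Z) :=
    { toFun := q
      map_add' := by
        intro x y
        apply LinearMap.ext
        intro z
        obtain ⟨m, rfl⟩ := hsur z
        rw [LinearMap.add_apply, hq, hq, hq, map_add, LinearMap.add_apply,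
          Submodule.Quotient.mk_add]
      map_smul' := by
        intro c x
        apply LinearMap.ext
        intro z
        obtain ⟨m, rfl⟩ := hsur z
        rw [RingHom.id_apply, LinearMap.smul_apply, hq, hq, map_smul,
          LinearMap.smul_apply, Submodule.Quotient.mk_smul] }
  have hD : ∀ (x : V0) (m : M),
      D x (Submodule.Quotient.mk m) = Submodule.Quotient.mk (d x m) := hq
  have hDpow : ∀ (x : V0) (n : ℕ) (m : M),
      (D x ^ n) (Submodule.Quotient.mk m) = Submodule.Quotient.mk ((d x ^ n) m) := by
    intro x n
    induction n with
    | zero => intro m; simp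
    | succ n ih =>
      intro m
      rw [pow_succ', pow_succ']
      rw [Module.End.mul_apply, Module.End.mul_apply]
      rw [← hD x ((d x ^ n) m), ← ih m]
  let r : LieRep L (M ⧸ Z) :=
    { tod := D
      comm := by
        intro x y
        apply LinearMap.ext
        intro z
        obtain ⟨m, rfl⟩ := hsur z
        rw [hD, hcomm, LinearMap.sub_apply, LinearMap.comp_apply, LinearMap.comp_apply,
          LinearMap.sub_apply, LinearMap.comp_apply, LinearMap.comp_apply,
          Submodule.Quotient.mk_sub, hD, hD, hD, hD] }
  haveI : Nontrivial (M ⧸ Z) := Submodule.Quotient.nontrivial_iff.mpr hne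
  have hrnil : ∀ x : V0, _root_.IsNilpotent (r.tod x : Module.End ℂ (M ⧸ Z)) := by
    intro x
    obtain ⟨n, hn⟩ := hnil x
    refine ⟨n, ?_⟩
    apply LinearMap.ext
    intro z
    obtain ⟨m, rfl⟩ := hsur z
    show (D x ^ n) (Submodule.Quotient.mk m) = 0
    rw [hDpow, hn]
    simp
  obtain ⟨mz, hmz0, hmz⟩ := r.exists_ker hrnil
  obtain ⟨m, rfl⟩ := hsur mz
  refine ⟨m, ?_, ?_⟩
  · intro hmem
    exact hmz0 ((Submodule.Quotient.mk_eq_zero Z).mpr hmem)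
  · intro x
    have := hmz x
    rw [show r.tod x = D x from rfl, hD] at this
    exact (Submodule.Quotient.mk_eq_zero Z).mp this

end SuperBracket

namespace SuperBracket

variable {V0 V1 : Type*} [AddCommGroup V0] [Module ℂ V0] [AddCommGroup V1] [Module ℂ V1]

/-- The lower central series of the odd part as a module over the even part. -/
def qser (L : SuperBracket V0 V1) : ℕ → Submodule ℂ V1
  | 0 => ⊤
  | j + 1 => Submodule.span ℂ {z | ∃ x v, v ∈ qser L j ∧ z = L.ρ x v}

lemma rho_mem_qser (L : SuperBracket V0 V1) {j : ℕ} {v : V1} (x : V0)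
    (hv : v ∈ qser L j) : L.ρ x v ∈ qser L (j + 1) :=
  Submodule.subset_span ⟨x, v, hv, rfl⟩

/-- The ascending chain of iterated kernels of the action on the odd part. -/
def cser (L : SuperBracket V0 V1) : ℕ → Submodule ℂ V1
  | 0 => ⊥
  | k + 1 =>
    { carrier := {v | ∀ x : V0, L.ρ x v ∈ cser L k}
      add_mem' := by
        intro a b ha hb x
        rw [map_add]
        exact (cser L k).add_mem (ha x) (hb x)
      zero_mem' := by
        intro x
        rw [map_zero]
        exact (cser L k).zero_mem
      smul_mem' := by
        intro c v hv x
        rw [map_smul]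
        exact (cser L k).smul_mem c (hv x) }

lemma mem_cser_succ (L : SuperBracket V0 V1) {k : ℕ} {v : V1} :
    v ∈ cser L (k + 1) ↔ ∀ x : V0, L.ρ x v ∈ cser L k := Iff.rfl

lemma cser_mono (L : SuperBracket V0 V1) : ∀ k, cser L k ≤ cser L (k + 1) := by
  intro k
  induction k with
  | zero => exact bot_le
  | succ k ih =>
    intro v hv
    rw [mem_cser_succ] at hv ⊢
    exact fun x => ih (hv x)

lemma cser_inv (L : SuperBracket V0 V1) : ∀ (k : ℕ) (x : V0), ∀ v ∈ cser L k,
    L.ρ x v ∈ cser L k := by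
  intro k x v hv
  cases k with
  | zero =>
    rw [show L.cser 0 = ⊥ from rfl, Submodule.mem_bot] at hv
    rw [hv, map_zero]
    exact Submodule.zero_mem _
  | succ k =>
    exact cser_mono L k (hv x)

lemma rho_comm (L : SuperBracket V0 V1) (x y : V0) :
    L.ρ (L.b0 x y) = L.ρ x ∘ₗ L.ρ y - L.ρ y ∘ₗ L.ρ x := by
  apply LinearMap.ext
  intro u
  rw [LinearMap.sub_apply, LinearMap.comp_apply, LinearMap.comp_apply]
  exact L.jacobi001 x y u

lemma exists_cser_top (L : SuperBracket V0 V1) [FiniteDimensional ℂ V0]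
    [FiniteDimensional ℂ V1]
    (hnil : ∀ x : V0, _root_.IsNilpotent (L.ρ x : Module.End ℂ V1)) :
    ∃ K, cser L K = ⊤ := by
  have grow : ∀ k, cser L k ≠ ⊤ → cser L k < cser L (k + 1) := by
    intro k hk
    obtain ⟨v, hv0, hv⟩ := exists_rel_ker L L.ρ (rho_comm L) hnil (cser L k)
      (cser_inv L k) hk
    exact lt_of_le_of_ne (cser_mono L k) (fun h => hv0 (h ▸ (mem_cser_succ L).mpr hv))
  have hrank : ∀ k, cser L k = ⊤ ∨ k ≤ Module.finrank ℂ (cser L k) := by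
    intro k
    induction k with
    | zero => right; exact Nat.zero_le _
    | succ k ih =>
      rcases ih with h | h
      · left
        exact top_le_iff.mp (h ▸ cser_mono L k)
      · by_cases hk : cser L k = ⊤
        · left
          exact top_le_iff.mp (hk ▸ cser_mono L k)
        · right
          have := Submodule.finrank_lt_finrank_of_lt (grow k hk)
          omega
  rcases hrank (Module.finrank ℂ V1 + 1) with h | h
  · exact ⟨_, h⟩
  · have := Submodule.finrank_le (cser L (Module.finrank ℂ V1 + 1))
    omega

lemma exists_qser_bot (L : SuperBracket V0 V1) [FiniteDimensional ℂ V0]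
    [FiniteDimensional ℂ V1]
    (hnil : ∀ x : V0, _root_.IsNilpotent (L.ρ x : Module.End ℂ V1)) :
    ∃ q, qser L q = ⊥ := by
  obtain ⟨K, hK⟩ := exists_cser_top L hnil
  have key : ∀ j, qser L j ≤ cser L (K - j) := by
    intro j
    induction j with
    | zero => rw [Nat.sub_zero, hK]; exact le_top
    | succ j ih =>
      rw [show qser L (j+1) = Submodule.span ℂ {z | ∃ x v, v ∈ qser L j ∧ z = L.ρ x v}
        from rfl]
      rw [Submodule.span_le]
      rintro z ⟨x, v, hv, rfl⟩
      have hvc := ih hv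
      rcases Nat.eq_zero_or_pos (K - j) with h0 | hpos
      · rw [h0, show L.cser 0 = ⊥ from rfl, Submodule.mem_bot] at hvc
        rw [hvc, map_zero]
        exact Submodule.zero_mem _
      · obtain ⟨m, hm⟩ : ∃ m, K - j = m + 1 := ⟨K - j - 1, by omega⟩
        rw [hm] at hvc
        have : L.ρ x v ∈ cser L m := hvc x
        have hmeq : K - (j + 1) = m := by omega
        rw [hmeq]
        exact this
  refine ⟨K, ?_⟩
  have := key K
  rw [Nat.sub_self] at this
  exact le_bot_iff.mp this

lemma b0_nil (L : SuperBracket V0 V1) {k : ℕ} (hs : series0 L k = ⊥) (x : V0) :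
    _root_.IsNilpotent (L.b0 x : Module.End ℂ V0) := by
  have key : ∀ (j : ℕ) (a : V0), ((L.b0 x : Module.End ℂ V0) ^ j) a ∈ series0 L j := by
    intro j
    induction j with
    | zero => intro a; exact Submodule.mem_top
    | succ j ih =>
      intro a
      rw [pow_succ', Module.End.mul_apply]
      exact Submodule.subset_span ⟨x, _, ih a, rfl⟩
  refine ⟨k, ?_⟩
  apply LinearMap.ext
  intro a
  have := key k a
  rw [hs, Submodule.mem_bot] at this
  rw [this, LinearMap.zero_apply]

end SuperBracket

namespace SuperBracket

variable {V0 V1 : Type*} [AddCommGroup V0] [Module ℂ V0] [AddCommGroup V1] [Module ℂ V1]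

section CoreIdentities

variable (L : SuperBracket V0 V1)

lemma half_mem {W : Type*} [AddCommGroup W] [Module ℂ W] (Z : Submodule ℂ W) {w : W}
    (h : (2 : ℂ) • w ∈ Z) : w ∈ Z := by
  have h2 := Z.smul_mem ((2 : ℂ)⁻¹) h
  rw [smul_smul] at h2
  norm_num at h2
  exact h2

lemma b0_comm (x y : V0) :
    L.b0 (L.b0 x y) = L.b0 x ∘ₗ L.b0 y - L.b0 y ∘ₗ L.b0 x := by
  apply LinearMap.ext
  intro z
  rw [LinearMap.sub_apply, LinearMap.comp_apply, LinearMap.comp_apply]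
  rw [L.b0_leibniz x y z]
  abel

lemma id1 (x a : V0) (b : V1) :
    L.ρ x (L.ρ a b) = L.ρ (L.b0 x a) b + L.ρ a (L.ρ x b) := by
  rw [L.jacobi001 x a b]
  abel

lemma id2 (a : V0) (y b : V1) :
    L.Γ y (L.ρ a b) = L.b0 a (L.Γ y b) - L.Γ (L.ρ a y) b := by
  rw [L.jacobi011 a y b]
  abel

lemma id3 (a : V0) (b : V1) :
    (2 : ℂ) • L.Γ b (L.ρ a b) = L.b0 a (L.Γ b b) := by
  rw [L.jacobi011 a b b, L.Γ_symm (L.ρ a b) b, two_smul]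

lemma id5 (b v t : V1) :
    L.ρ (L.Γ b v) t = -(L.ρ (L.Γ t v) b) - L.ρ (L.Γ b t) v := by
  have h := L.jacobi111 b v t
  rw [L.Γ_symm v t] at h
  have h2 : L.ρ (L.Γ b v) t - (-(L.ρ (L.Γ t v) b) - L.ρ (L.Γ b t) v) =
      L.ρ (L.Γ b v) t + L.ρ (L.Γ t v) b + L.ρ (L.Γ b t) v := by abel
  rw [h] at h2
  exact sub_eq_zero.mp h2

lemma id6 (b v : V1) :
    (2 : ℂ) • L.ρ (L.Γ b v) b = -(L.ρ (L.Γ b b) v) := by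
  have h := L.jacobi111 b v b
  rw [L.Γ_symm v b] at h
  have h2 : (2 : ℂ) • L.ρ (L.Γ b v) b - (-(L.ρ (L.Γ b b) v)) =
      L.ρ (L.Γ b v) b + L.ρ (L.Γ b v) b + L.ρ (L.Γ b b) v := by
    rw [two_smul]; abel
  rw [h] at h2
  exact sub_eq_zero.mp h2

end CoreIdentities

/-- A homogeneous vector outside `Z` which is moved into `Z` by all even
operators and by the odd operators from `T`. -/
def Cand (L : SuperBracket V0 V1) (Z0 : Submodule ℂ V0) (Z1 : Submodule ℂ V1)
    (T : Submodule ℂ V1) : Prop :=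
  (∃ a, a ∉ Z0 ∧ (∀ x : V0, L.b0 x a ∈ Z0) ∧ (∀ u ∈ T, L.ρ a u ∈ Z1)) ∨
  (∃ v, v ∉ Z1 ∧ (∀ x : V0, L.ρ x v ∈ Z1) ∧ (∀ u ∈ T, L.Γ u v ∈ Z0))

lemma cand_mono {L : SuperBracket V0 V1} {Z0 Z1 T T'} (h : T' ≤ T) :
    Cand L Z0 Z1 T → Cand L Z0 Z1 T' := by
  rintro (⟨a, h0, h1, h2⟩ | ⟨v, h0, h1, h2⟩)
  · exact Or.inl ⟨a, h0, h1, fun u hu => h2 u (h hu)⟩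
  · exact Or.inr ⟨v, h0, h1, fun u hu => h2 u (h hu)⟩

lemma cand_step (L : SuperBracket V0 V1) {Z0 : Submodule ℂ V0} {Z1 : Submodule ℂ V1}
    (hI3 : ∀ a ∈ Z0, ∀ u : V1, L.ρ a u ∈ Z1)
    (hI4 : ∀ u : V1, ∀ v ∈ Z1, L.Γ u v ∈ Z0)
    {T : Submodule ℂ V1} {b : V1} (hb : ∀ x : V0, L.ρ x b ∈ T) :
    Cand L Z0 Z1 T → Cand L Z0 Z1 (T ⊔ Submodule.span ℂ {b}) := by
  have hmem : ∀ u ∈ T ⊔ Submodule.span ℂ {b}, ∃ y ∈ T, ∃ c : ℂ, u = y + c • b := by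
    intro u hu
    rw [Submodule.mem_sup] at hu
    obtain ⟨y, hy, z, hz, rfl⟩ := hu
    rw [Submodule.mem_span_singleton] at hz
    obtain ⟨c, rfl⟩ := hz
    exact ⟨y, hy, c, rfl⟩
  rintro (⟨a, ha0, hc1, hc2⟩ | ⟨v, hv0, hc1, hc2⟩)
  · -- even candidate
    by_cases hρ : L.ρ a b ∈ Z1
    · left
      refine ⟨a, ha0, hc1, ?_⟩
      intro u hu
      obtain ⟨y, hy, c, rfl⟩ := hmem u hu
      rw [map_add, map_smul]
      exact Z1.add_mem (hc2 y hy) (Z1.smul_mem c hρ)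
    · right
      refine ⟨L.ρ a b, hρ, ?_, ?_⟩
      · intro x
        rw [id1]
        exact Z1.add_mem (hI3 _ (hc1 x) b) (hc2 _ (hb x))
      · intro u hu
        obtain ⟨y, hy, c, rfl⟩ := hmem u hu
        rw [map_add, map_smul, LinearMap.add_apply, LinearMap.smul_apply]
        refine Z0.add_mem ?_ (Z0.smul_mem c ?_)
        · rw [id2]
          refine Z0.sub_mem ?_ ?_
          · rw [L.b0_skew]
            exact Z0.neg_mem (hc1 _)
          · rw [L.Γ_symm]
            exact hI4 _ _ (hc2 y hy)
        · refine half_mem Z0 ?_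
          rw [id3, L.b0_skew]
          exact Z0.neg_mem (hc1 _)
  · -- odd candidate
    by_cases hΓ : L.Γ b v ∈ Z0
    · right
      refine ⟨v, hv0, hc1, ?_⟩
      intro u hu
      obtain ⟨y, hy, c, rfl⟩ := hmem u hu
      rw [map_add, map_smul, LinearMap.add_apply, LinearMap.smul_apply]
      exact Z0.add_mem (hc2 y hy) (Z0.smul_mem c hΓ)
    · left
      refine ⟨L.Γ b v, hΓ, ?_, ?_⟩
      · intro x
        rw [L.jacobi011 x b v]
        exact Z0.add_mem (hc2 _ (hb x)) (hI4 b _ (hc1 x))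
      · intro u hu
        obtain ⟨y, hy, c, rfl⟩ := hmem u hu
        rw [map_add, map_smul]
        refine Z1.add_mem ?_ (Z1.smul_mem c ?_)
        · rw [id5]
          refine Z1.sub_mem (Z1.neg_mem ?_) ?_
          · exact hI3 _ (hc2 y hy) b
          · exact hc1 _
        · refine half_mem Z1 ?_
          rw [id6]
          exact Z1.neg_mem (hc1 _)

lemma cand_finset (L : SuperBracket V0 V1) {Z0 : Submodule ℂ V0} {Z1 : Submodule ℂ V1}
    (hI3 : ∀ a ∈ Z0, ∀ u : V1, L.ρ a u ∈ Z1)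
    (hI4 : ∀ u : V1, ∀ v ∈ Z1, L.Γ u v ∈ Z0)
    (s : Finset V1) :
    ∀ (T : Submodule ℂ V1), (∀ b ∈ s, ∀ x : V0, L.ρ x b ∈ T) →
    Cand L Z0 Z1 T →
    ∃ T', T ≤ T' ∧ Submodule.span ℂ (s : Set V1) ≤ T' ∧ Cand L Z0 Z1 T' := by
  classical
  induction s using Finset.induction_on with
  | empty =>
    intro T _ hc
    exact ⟨T, le_rfl, by simp, hc⟩
  | @insert a s ha ih =>
    intro T hbs hc
    obtain ⟨T', hT1, hT2, hcand⟩ := ih T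
      (fun b hb x => hbs b (Finset.mem_insert_of_mem hb) x) hc
    have hb' : ∀ x : V0, L.ρ x a ∈ T' :=
      fun x => hT1 (hbs a (Finset.mem_insert_self a s) x)
    have hstep := cand_step L hI3 hI4 hb' hcand
    refine ⟨T' ⊔ Submodule.span ℂ {a}, le_trans hT1 le_sup_left, ?_, hstep⟩
    rw [Finset.coe_insert, Submodule.span_le]
    intro z hz
    rcases Set.mem_insert_iff.mp hz with h | h
    · subst h
      exact Submodule.mem_sup_right (Submodule.subset_span rfl)
    · exact Submodule.mem_sup_left (hT2 (Submodule.subset_span h))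

lemma cand_descent (L : SuperBracket V0 V1) [FiniteDimensional ℂ V1]
    {Z0 : Submodule ℂ V0} {Z1 : Submodule ℂ V1}
    (hI3 : ∀ a ∈ Z0, ∀ u : V1, L.ρ a u ∈ Z1)
    (hI4 : ∀ u : V1, ∀ v ∈ Z1, L.Γ u v ∈ Z0)
    {j : ℕ} :
    Cand L Z0 Z1 (qser L (j + 1)) → Cand L Z0 Z1 (qser L j) := by
  intro hc
  obtain ⟨s, hs⟩ := IsNoetherian.noetherian (qser L j)
  have hbs : ∀ b ∈ s, ∀ x : V0, L.ρ x b ∈ qser L (j + 1) := by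
    intro b hb x
    exact rho_mem_qser L x (hs ▸ Submodule.subset_span hb)
  obtain ⟨T', hT1, hT2, hcand⟩ := cand_finset L hI3 hI4 s (qser L (j + 1)) hbs hc
  exact cand_mono (hs ▸ hT2) hcand

lemma cand_start (L : SuperBracket V0 V1) [FiniteDimensional ℂ V0]
    {Z0 : Submodule ℂ V0} {Z1 : Submodule ℂ V1}
    (hs0 : ∃ k, series0 L k = ⊥)
    (hnil : ∀ x : V0, _root_.IsNilpotent (L.ρ x : Module.End ℂ V1))
    (hI1 : ∀ (x : V0), ∀ a ∈ Z0, L.b0 x a ∈ Z0)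
    (hI2 : ∀ (x : V0), ∀ v ∈ Z1, L.ρ x v ∈ Z1)
    (hne : ¬(Z0 = ⊤ ∧ Z1 = ⊤)) : Cand L Z0 Z1 ⊥ := by
  by_cases h0 : Z0 = ⊤
  · have h1 : Z1 ≠ ⊤ := fun h => hne ⟨h0, h⟩
    obtain ⟨v, hv0, hv⟩ := exists_rel_ker L L.ρ (rho_comm L) hnil Z1 hI2 h1
    refine Or.inr ⟨v, hv0, hv, ?_⟩
    intro u hu
    rw [Submodule.mem_bot] at hu
    rw [hu, map_zero, LinearMap.zero_apply]
    exact Z0.zero_mem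
  · obtain ⟨k, hk⟩ := hs0
    have hb0nil : ∀ x : V0, _root_.IsNilpotent (L.b0 x : Module.End ℂ V0) :=
      fun x => b0_nil L hk x
    obtain ⟨a, ha0, ha⟩ := exists_rel_ker L L.b0 (b0_comm L) hb0nil Z0 hI1 h0
    refine Or.inl ⟨a, ha0, ha, ?_⟩
    intro u hu
    rw [Submodule.mem_bot] at hu
    rw [hu, map_zero]
    exact Z1.zero_mem

lemma cand_top (L : SuperBracket V0 V1) [FiniteDimensional ℂ V0] [FiniteDimensional ℂ V1]
    {Z0 : Submodule ℂ V0} {Z1 : Submodule ℂ V1}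
    (hs0 : ∃ k, series0 L k = ⊥)
    (hnil : ∀ x : V0, _root_.IsNilpotent (L.ρ x : Module.End ℂ V1))
    (hI1 : ∀ (x : V0), ∀ a ∈ Z0, L.b0 x a ∈ Z0)
    (hI2 : ∀ (x : V0), ∀ v ∈ Z1, L.ρ x v ∈ Z1)
    (hI3 : ∀ a ∈ Z0, ∀ u : V1, L.ρ a u ∈ Z1)
    (hI4 : ∀ u : V1, ∀ v ∈ Z1, L.Γ u v ∈ Z0)
    (hne : ¬(Z0 = ⊤ ∧ Z1 = ⊤)) : Cand L Z0 Z1 ⊤ := by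
  obtain ⟨q, hq⟩ := exists_qser_bot L hnil
  have start : Cand L Z0 Z1 (qser L q) := by
    rw [hq]
    exact cand_start L hs0 hnil hI1 hI2 hne
  have key : ∀ i, Cand L Z0 Z1 (qser L (q - i)) := by
    intro i
    induction i with
    | zero => rw [Nat.sub_zero]; exact start
    | succ i ih =>
      rcases Nat.eq_zero_or_pos (q - i) with h | h
      · have h2 : q - (i + 1) = 0 := by omega
        rw [h2]
        rw [h] at ih
        exact ih
      · have he : q - i = (q - (i + 1)) + 1 := by omega
        rw [he] at ih
        exact cand_descent L hI3 hI4 ih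
  have := key q
  rw [Nat.sub_self] at this
  rw [show qser L 0 = ⊤ from rfl] at this
  exact this

end SuperBracket

namespace SuperBracket

variable {V0 V1 : Type*} [AddCommGroup V0] [Module ℂ V0] [AddCommGroup V1] [Module ℂ V1]

/-- One step of the ascending central series, even part. -/
def zstep0 (L : SuperBracket V0 V1) (Z0 : Submodule ℂ V0) (Z1 : Submodule ℂ V1) :
    Submodule ℂ V0 where
  carrier := {a | (∀ x : V0, L.b0 x a ∈ Z0) ∧ ∀ u : V1, L.ρ a u ∈ Z1}
  add_mem' := by
    intro a b ha hb
    refine ⟨fun x => ?_, fun u => ?_⟩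
    · rw [map_add]
      exact Z0.add_mem (ha.1 x) (hb.1 x)
    · rw [map_add, LinearMap.add_apply]
      exact Z1.add_mem (ha.2 u) (hb.2 u)
  zero_mem' := by
    refine ⟨fun x => ?_, fun u => ?_⟩
    · rw [map_zero]
      exact Z0.zero_mem
    · rw [map_zero, LinearMap.zero_apply]
      exact Z1.zero_mem
  smul_mem' := by
    intro c a ha
    refine ⟨fun x => ?_, fun u => ?_⟩
    · rw [map_smul]
      exact Z0.smul_mem c (ha.1 x)
    · rw [map_smul, LinearMap.smul_apply]
      exact Z1.smul_mem c (ha.2 u)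

/-- One step of the ascending central series, odd part. -/
def zstep1 (L : SuperBracket V0 V1) (Z0 : Submodule ℂ V0) (Z1 : Submodule ℂ V1) :
    Submodule ℂ V1 where
  carrier := {v | (∀ x : V0, L.ρ x v ∈ Z1) ∧ ∀ u : V1, L.Γ u v ∈ Z0}
  add_mem' := by
    intro a b ha hb
    refine ⟨fun x => ?_, fun u => ?_⟩
    · rw [map_add]
      exact Z1.add_mem (ha.1 x) (hb.1 x)
    · rw [map_add]
      exact Z0.add_mem (ha.2 u) (hb.2 u)
  zero_mem' := by
    refine ⟨fun x => ?_, fun u => ?_⟩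
    · rw [map_zero]
      exact Z1.zero_mem
    · rw [map_zero]
      exact Z0.zero_mem
  smul_mem' := by
    intro c a ha
    refine ⟨fun x => ?_, fun u => ?_⟩
    · rw [map_smul]
      exact Z1.smul_mem c (ha.1 x)
    · rw [map_smul]
      exact Z0.smul_mem c (ha.2 u)

/-- The ascending central series of the superalgebra. -/
def zs (L : SuperBracket V0 V1) : ℕ → Submodule ℂ V0 × Submodule ℂ V1
  | 0 => (⊥, ⊥)
  | k + 1 => (zstep0 L (zs L k).1 (zs L k).2, zstep1 L (zs L k).1 (zs L k).2)

lemma mem_zs0 (L : SuperBracket V0 V1) {k : ℕ} {a : V0} :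
    a ∈ (zs L (k + 1)).1 ↔ (∀ x : V0, L.b0 x a ∈ (zs L k).1) ∧
      ∀ u : V1, L.ρ a u ∈ (zs L k).2 := Iff.rfl

lemma mem_zs1 (L : SuperBracket V0 V1) {k : ℕ} {v : V1} :
    v ∈ (zs L (k + 1)).2 ↔ (∀ x : V0, L.ρ x v ∈ (zs L k).2) ∧
      ∀ u : V1, L.Γ u v ∈ (zs L k).1 := Iff.rfl

lemma zs_mono (L : SuperBracket V0 V1) :
    ∀ k, (zs L k).1 ≤ (zs L (k + 1)).1 ∧ (zs L k).2 ≤ (zs L (k + 1)).2 := by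
  intro k
  induction k with
  | zero => exact ⟨bot_le, bot_le⟩
  | succ k ih =>
    constructor
    · intro a ha
      rw [mem_zs0] at ha ⊢
      exact ⟨fun x => ih.1 (ha.1 x), fun u => ih.2 (ha.2 u)⟩
    · intro v hv
      rw [mem_zs1] at hv ⊢
      exact ⟨fun x => ih.2 (hv.1 x), fun u => ih.1 (hv.2 u)⟩

lemma zs_inv1 (L : SuperBracket V0 V1) (k : ℕ) :
    ∀ (x : V0), ∀ a ∈ (zs L k).1, L.b0 x a ∈ (zs L k).1 := by
  intro x a ha
  cases k with
  | zero =>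
    rw [show (zs L 0).1 = ⊥ from rfl, Submodule.mem_bot] at ha ⊢
    rw [ha, map_zero]
  | succ k => exact (zs_mono L k).1 (ha.1 x)

lemma zs_inv2 (L : SuperBracket V0 V1) (k : ℕ) :
    ∀ (x : V0), ∀ v ∈ (zs L k).2, L.ρ x v ∈ (zs L k).2 := by
  intro x v hv
  cases k with
  | zero =>
    rw [show (zs L 0).2 = ⊥ from rfl, Submodule.mem_bot] at hv ⊢
    rw [hv, map_zero]
  | succ k => exact (zs_mono L k).2 (hv.1 x)

lemma zs_inv3 (L : SuperBracket V0 V1) (k : ℕ) :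
    ∀ a ∈ (zs L k).1, ∀ u : V1, L.ρ a u ∈ (zs L k).2 := by
  intro a ha u
  cases k with
  | zero =>
    rw [show (zs L 0).1 = ⊥ from rfl, Submodule.mem_bot] at ha
    rw [show (zs L 0).2 = ⊥ from rfl, Submodule.mem_bot]
    rw [ha, map_zero, LinearMap.zero_apply]
  | succ k => exact (zs_mono L k).2 (ha.2 u)

lemma zs_inv4 (L : SuperBracket V0 V1) (k : ℕ) :
    ∀ u : V1, ∀ v ∈ (zs L k).2, L.Γ u v ∈ (zs L k).1 := by
  intro u v hv
  cases k with
  | zero =>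
    rw [show (zs L 0).2 = ⊥ from rfl, Submodule.mem_bot] at hv
    rw [show (zs L 0).1 = ⊥ from rfl, Submodule.mem_bot]
    rw [hv, map_zero]
  | succ k => exact (zs_mono L k).1 (hv.2 u)

lemma zs_grow (L : SuperBracket V0 V1) [FiniteDimensional ℂ V0] [FiniteDimensional ℂ V1]
    (hs0 : ∃ k, series0 L k = ⊥)
    (hnil : ∀ x : V0, _root_.IsNilpotent (L.ρ x : Module.End ℂ V1))
    (k : ℕ) (hne : ¬((zs L k).1 = ⊤ ∧ (zs L k).2 = ⊤)) :
    (zs L k).1 < (zs L (k + 1)).1 ∨ (zs L k).2 < (zs L (k + 1)).2 := by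
  have hc := cand_top L hs0 hnil (zs_inv1 L k) (zs_inv2 L k) (zs_inv3 L k)
    (zs_inv4 L k) hne
  rcases hc with ⟨a, ha0, h1, h2⟩ | ⟨v, hv0, h1, h2⟩
  · left
    refine lt_of_le_of_ne (zs_mono L k).1 (fun h => ha0 ?_)
    rw [h]
    exact (mem_zs0 L).mpr ⟨h1, fun u => h2 u Submodule.mem_top⟩
  · right
    refine lt_of_le_of_ne (zs_mono L k).2 (fun h => hv0 ?_)
    rw [h]
    exact (mem_zs1 L).mpr ⟨h1, fun u => h2 u Submodule.mem_top⟩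

lemma zs_top (L : SuperBracket V0 V1) [FiniteDimensional ℂ V0] [FiniteDimensional ℂ V1]
    (hs0 : ∃ k, series0 L k = ⊥)
    (hnil : ∀ x : V0, _root_.IsNilpotent (L.ρ x : Module.End ℂ V1)) :
    ∃ K, (zs L K).1 = ⊤ ∧ (zs L K).2 = ⊤ := by
  have hrank : ∀ k, ((zs L k).1 = ⊤ ∧ (zs L k).2 = ⊤) ∨
      k ≤ Module.finrank ℂ (zs L k).1 + Module.finrank ℂ (zs L k).2 := by
    intro k
    induction k with
    | zero => right; exact Nat.zero_le _
    | succ k ih =>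
      rcases ih with h | h
      · left
        exact ⟨top_le_iff.mp (h.1 ▸ (zs_mono L k).1), top_le_iff.mp (h.2 ▸ (zs_mono L k).2)⟩
      · by_cases hk : (zs L k).1 = ⊤ ∧ (zs L k).2 = ⊤
        · left
          exact ⟨top_le_iff.mp (hk.1 ▸ (zs_mono L k).1),
            top_le_iff.mp (hk.2 ▸ (zs_mono L k).2)⟩
        · right
          have hm1 := Submodule.finrank_mono (zs_mono L k).1
          have hm2 := Submodule.finrank_mono (zs_mono L k).2
          rcases zs_grow L hs0 hnil k hk with hlt | hlt
          · have := Submodule.finrank_lt_finrank_of_lt hlt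
            omega
          · have := Submodule.finrank_lt_finrank_of_lt hlt
            omega
  rcases hrank (Module.finrank ℂ V0 + Module.finrank ℂ V1 + 1) with h | h
  · exact ⟨_, h⟩
  · have h1 := Submodule.finrank_le (zs L (Module.finrank ℂ V0 + Module.finrank ℂ V1 + 1)).1
    have h2 := Submodule.finrank_le (zs L (Module.finrank ℂ V0 + Module.finrank ℂ V1 + 1)).2
    omega

lemma series_le_zs (L : SuperBracket V0 V1) {K : ℕ}
    (htop : (zs L K).1 = ⊤ ∧ (zs L K).2 = ⊤) :
    ∀ k, (series L k).1 ≤ (zs L (K - k)).1 ∧ (series L k).2 ≤ (zs L (K - k)).2 := by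
  intro k
  induction k with
  | zero =>
    rw [Nat.sub_zero, htop.1, htop.2]
    exact ⟨le_top, le_top⟩
  | succ k ih =>
    rcases Nat.eq_zero_or_pos (K - k) with h0 | hpos
    · -- previous stage is already ⊥
      have hK1 : K - (k + 1) = 0 := by omega
      have hb1 : (series L k).1 ≤ ⊥ := by
        have := ih.1; rwa [h0, show (zs L 0).1 = ⊥ from rfl] at this
      have hb2 : (series L k).2 ≤ ⊥ := by
        have := ih.2; rwa [h0, show (zs L 0).2 = ⊥ from rfl] at this
      rw [hK1]
      constructor
      · rw [show (series L (k+1)).1 = Submodule.span ℂ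
          ({z | ∃ x y, y ∈ (series L k).1 ∧ z = L.b0 x y} ∪
           {z | ∃ u v, v ∈ (series L k).2 ∧ z = L.Γ u v}) from rfl, Submodule.span_le]
        rintro z (⟨x, y, hy, rfl⟩ | ⟨u, v, hv, rfl⟩)
        · have : y = 0 := Submodule.mem_bot ℂ |>.mp (hb1 hy)
          rw [this, map_zero]
          exact Submodule.zero_mem _
        · have : v = 0 := Submodule.mem_bot ℂ |>.mp (hb2 hv)
          rw [this, map_zero]
          exact Submodule.zero_mem _
      · rw [show (series L (k+1)).2 = Submodule.span ℂ
          {z | ∃ x v, (x ∈ (series L k).1 ∨ v ∈ (series L k).2) ∧ z = L.ρ x v} from rfl,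
          Submodule.span_le]
        rintro z ⟨x, v, hxv, rfl⟩
        rcases hxv with hx | hv
        · have : x = 0 := Submodule.mem_bot ℂ |>.mp (hb1 hx)
          rw [this, map_zero, LinearMap.zero_apply]
          exact Submodule.zero_mem _
        · have : v = 0 := Submodule.mem_bot ℂ |>.mp (hb2 hv)
          rw [this, map_zero]
          exact Submodule.zero_mem _
    · obtain ⟨m, hm⟩ : ∃ m, K - k = m + 1 := ⟨K - k - 1, by omega⟩
      have hKm : K - (k + 1) = m := by omega
      have ih1 := ih.1
      have ih2 := ih.2
      rw [hm] at ih1 ih2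
      rw [hKm]
      constructor
      · rw [show (series L (k+1)).1 = Submodule.span ℂ
          ({z | ∃ x y, y ∈ (series L k).1 ∧ z = L.b0 x y} ∪
           {z | ∃ u v, v ∈ (series L k).2 ∧ z = L.Γ u v}) from rfl, Submodule.span_le]
        rintro z (⟨x, y, hy, rfl⟩ | ⟨u, v, hv, rfl⟩)
        · exact ((mem_zs0 L).mp (ih1 hy)).1 x
        · exact ((mem_zs1 L).mp (ih2 hv)).2 u
      · rw [show (series L (k+1)).2 = Submodule.span ℂ
          {z | ∃ x v, (x ∈ (series L k).1 ∨ v ∈ (series L k).2) ∧ z = L.ρ x v} from rfl,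
          Submodule.span_le]
        rintro z ⟨x, v, hxv, rfl⟩
        rcases hxv with hx | hv
        · exact ((mem_zs0 L).mp (ih1 hx)).2 v
        · exact ((mem_zs1 L).mp (ih2 hv)).1 x

lemma series0_le_series (L : SuperBracket V0 V1) :
    ∀ k, series0 L k ≤ (series L k).1 := by
  intro k
  induction k with
  | zero => exact le_top
  | succ k ih =>
    rw [show series0 L (k+1) = Submodule.span ℂ
      {z | ∃ x y, y ∈ series0 L k ∧ z = L.b0 x y} from rfl, Submodule.span_le]
    rintro z ⟨x, y, hy, rfl⟩
    exact Submodule.subset_span (Set.mem_union_left _ ⟨x, y, ih hy, rfl⟩)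

lemma rho_pow_mem (L : SuperBracket V0 V1) (x : V0) :
    ∀ (k : ℕ) (v : V1), ((L.ρ x : Module.End ℂ V1) ^ k) v ∈ (series L k).2 := by
  intro k
  induction k with
  | zero => intro v; exact Submodule.mem_top
  | succ k ih =>
    intro v
    rw [pow_succ', Module.End.mul_apply]
    exact Submodule.subset_span ⟨x, _, Or.inr (ih v), rfl⟩

end SuperBracket


/-- A finite-dimensional complex Lie superalgebra is nilpotent iff its even
part is a nilpotent Lie algebra and every `ρ(x)`, `x` even, is a nilpotent
endomorphism of the odd part. -/
theorem stmt7 {V0 V1 : Type*} [AddCommGroup V0] [Module ℂ V0]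
    [AddCommGroup V1] [Module ℂ V1]
    [FiniteDimensional ℂ V0] [FiniteDimensional ℂ V1]
    (L : SuperBracket V0 V1) :
    L.IsNilpotent ↔
      ((∃ k, L.series0 k = ⊥) ∧ ∀ x : V0, IsNilpotent (L.ρ x : Module.End ℂ V1)) := by
  constructor
  · rintro ⟨k, hk⟩
    have h1 : (SuperBracket.series L k).1 = ⊥ := by rw [hk]
    have h2 : (SuperBracket.series L k).2 = ⊥ := by rw [hk]
    constructor
    · exact ⟨k, le_bot_iff.mp (h1 ▸ SuperBracket.series0_le_series L k)⟩
    · intro x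
      refine ⟨k, ?_⟩
      apply LinearMap.ext
      intro v
      have := SuperBracket.rho_pow_mem L x k v
      rw [h2, Submodule.mem_bot] at this
      rw [this, LinearMap.zero_apply]
  · rintro ⟨hs0, hnil⟩
    obtain ⟨K, hK⟩ := SuperBracket.zs_top L hs0 hnil
    have h := SuperBracket.series_le_zs L hK K
    rw [Nat.sub_self] at h
    refine ⟨K, ?_⟩
    have h1 : (SuperBracket.series L K).1 = ⊥ := le_bot_iff.mp h.1
    have h2 : (SuperBracket.series L K).2 = ⊥ := le_bot_iff.mp h.2
    exact Prod.ext h1 h2
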